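/- arXiv:1912.11038 — 2 statements merged into one kernel-verified Lean document; each statement's English description precedes it below -/
import Mathlib

section
/- Let ⟨G,M,I⟩ be a formal context with G and M finite, and let (A,B) be a concept of ⟨G,M,I⟩. Define the family FP_{(A,B)} = { β({b}) ∩ A : b ∈ M \ B } of subsets of G. Then a concept (A',B') of ⟨G,M,I⟩ is an immediate predecessor of (A,B) in the concept lattice if and only if A' is an inclusion-maximal element of FP_{(A,B)}. Consequently, the map sending each immediate predecessor of (A,B) to its extent is a bijection between the set of immediate predecessors of (A,B) and the set of inclusion-maximal elements of FP_{(A,B)}. -/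
/-- The intent (derivation) of a set of objects: attributes shared by all of them. -/
def intentOf {G M : Type*} (I : G → M → Prop) (A : Set G) : Set M :=
  {m | ∀ a ∈ A, I a m}

/-- The extent (derivation) of a set of attributes: objects possessing all of them. -/
def extentOf {G M : Type*} (I : G → M → Prop) (B : Set M) : Set G :=
  {g | ∀ b ∈ B, I g b}

/-- A formal concept of the context ⟨G,M,I⟩, given as a pair (extent, intent). -/
def IsConcept {G M : Type*} (I : G → M → Prop) (c : Set G × Set M) : Prop :=
  intentOf I c.1 = c.2 ∧ extentOf I c.2 = c.1

/-- The order on concepts: strict comparison by inclusion of extents. -/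
def ConceptLT {G M : Type*} (c d : Set G × Set M) : Prop := c.1 ⊂ d.1

/-- `c` is an immediate predecessor of `d`: a concept strictly below `d`
with no concept strictly in between. -/
def IsImmPred {G M : Type*} (I : G → M → Prop) (c d : Set G × Set M) : Prop :=
  IsConcept I c ∧ ConceptLT c d ∧
    ∀ e, IsConcept I e → ConceptLT c e → ¬ ConceptLT e d

/-- The family FP_{(A,B)} = { β({b}) ∩ A : b ∈ M \ B }. -/
def FP {G M : Type*} (I : G → M → Prop) (A : Set G) (B : Set M) : Set (Set G) :=
  {X | ∃ b, b ∉ B ∧ X = extentOf I {b} ∩ A}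

section Helpers
variable {G M : Type*} (I : G → M → Prop)

lemma subset_extentOf_intentOf (A : Set G) : A ⊆ extentOf I (intentOf I A) :=
  fun a ha b hb => hb a ha

lemma subset_intentOf_extentOf (B : Set M) : B ⊆ intentOf I (extentOf I B) :=
  fun b hb a ha => ha b hb

lemma intentOf_anti {A A' : Set G} (h : A ⊆ A') : intentOf I A' ⊆ intentOf I A :=
  fun m hm a ha => hm a (h ha)

lemma extentOf_anti {B B' : Set M} (h : B ⊆ B') : extentOf I B' ⊆ extentOf I B :=
  fun g hg b hb => hg b (h hb)

lemma extentOf_intentOf_extentOf (B : Set M) :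
    extentOf I (intentOf I (extentOf I B)) = extentOf I B :=
  Set.Subset.antisymm (extentOf_anti I (subset_intentOf_extentOf I B))
    (subset_extentOf_intentOf I (extentOf I B))

variable {I} {A : Set G} {B : Set M}

/-- Every member of FP is an extent. -/
lemma FP_extent (hAB : IsConcept I (A, B)) {X : Set G} (hX : X ∈ FP I A B) :
    extentOf I (intentOf I X) = X := by
  obtain ⟨b, hb, rfl⟩ := hX
  have h : extentOf I {b} ∩ A = extentOf I (insert b B) := by
    have hA : extentOf I B = A := hAB.2
    ext g
    constructor
    · rintro ⟨h1, h2⟩ m hm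
      rcases hm with rfl | hm
      · exact h1 m rfl
      · rw [← hA] at h2; exact h2 m hm
    · intro h
      refine ⟨fun m hm => ?_, ?_⟩
      · rcases hm with rfl; exact h m (Or.inl rfl)
      · rw [← hA]; exact fun m hm => h m (Or.inr hm)
  rw [h, extentOf_intentOf_extentOf]

/-- Every member of FP is a strict subset of A. -/
lemma FP_ssubset (hAB : IsConcept I (A, B)) {X : Set G} (hX : X ∈ FP I A B) : X ⊂ A := by
  obtain ⟨b, hb, rfl⟩ := hX
  refine ⟨Set.inter_subset_right, fun h => hb ?_⟩
  have : b ∈ intentOf I A := fun a ha => (h ha).1 b rfl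
  rwa [show intentOf I A = B from hAB.1] at this

/-- A concept strictly below (A,B) is below some member of FP. -/
lemma exists_FP_above (hAB : IsConcept I (A, B)) {c : Set G × Set M} (hc : IsConcept I c)
    (hsub : c.1 ⊆ A) (hne : c.1 ≠ A) : ∃ X ∈ FP I A B, c.1 ⊆ X := by
  have hB : B ⊆ c.2 := by
    have h1 : intentOf I A = B := hAB.1
    have h2 : intentOf I c.1 = c.2 := hc.1
    rw [← h1, ← h2]; exact intentOf_anti I hsub
  have : ∃ b ∈ c.2, b ∉ B := by
    by_contra h
    push_neg at h
    have hBB : c.2 = B := Set.Subset.antisymm h hB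
    apply hne
    have h2 : extentOf I c.2 = c.1 := hc.2
    have h3 : extentOf I B = A := hAB.2
    rw [← h2, hBB, h3]
  obtain ⟨b, hbc, hbB⟩ := this
  refine ⟨extentOf I {b} ∩ A, ⟨b, hbB, rfl⟩, fun a ha => ⟨?_, hsub ha⟩⟩
  intro m hm
  rw [Set.mem_singleton_iff] at hm
  subst hm
  have : m ∈ intentOf I c.1 := by rw [hc.1]; exact hbc
  exact this a ha

end Helpers

theorem bordat_dual_immediate_predecessors
    {G M : Type*} [Finite G] [Finite M]
    (I : G → M → Prop) (A : Set G) (B : Set M)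
    (hAB : IsConcept I (A, B)) :
    (∀ c : Set G × Set M, IsConcept I c →
      (IsImmPred I c (A, B) ↔
        (c.1 ∈ FP I A B ∧ ∀ X ∈ FP I A B, c.1 ⊆ X → X = c.1))) ∧
    Set.BijOn Prod.fst
      {c : Set G × Set M | IsConcept I c ∧ IsImmPred I c (A, B)}
      {X ∈ FP I A B | ∀ Y ∈ FP I A B, X ⊆ Y → Y = X} := by
  have key : ∀ c : Set G × Set M, IsConcept I c →
      (IsImmPred I c (A, B) ↔
        (c.1 ∈ FP I A B ∧ ∀ X ∈ FP I A B, c.1 ⊆ X → X = c.1)) := by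
    intro c hc
    constructor
    · rintro ⟨-, hlt, himm⟩
      have hmax : ∀ X ∈ FP I A B, c.1 ⊆ X → X = c.1 := by
        intro X hX hsub
        by_contra hne
        have he : IsConcept I (X, intentOf I X) := ⟨rfl, FP_extent hAB hX⟩
        exact himm (X, intentOf I X) he
          (hsub.ssubset_of_ne (fun h => hne h.symm)) (FP_ssubset hAB hX)
      obtain ⟨X, hXFP, hsub⟩ := exists_FP_above hAB hc hlt.subset hlt.ne
      exact ⟨(hmax X hXFP hsub) ▸ hXFP, hmax⟩
    · rintro ⟨hmem, hmax⟩
      refine ⟨hc, FP_ssubset hAB hmem, ?_⟩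
      intro e he hce hed
      obtain ⟨X, hXFP, hsub⟩ := exists_FP_above hAB he hed.subset hed.ne
      have hX : X = c.1 := hmax X hXFP (hce.subset.trans hsub)
      exact hce.not_subset (hX ▸ hsub)
  refine ⟨key, ?_, ?_, ?_⟩
  · rintro c ⟨hc, himm⟩
    exact (key c hc).mp himm
  · rintro c ⟨hc, -⟩ d ⟨hd, -⟩ h
    exact Prod.ext h (by rw [← hc.1, ← hd.1, h])
  · rintro X ⟨hXFP, hXmax⟩
    have he : IsConcept I (X, intentOf I X) := ⟨rfl, FP_extent hAB hXFP⟩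
    exact ⟨(X, intentOf I X), ⟨he, (key _ he).mpr ⟨hXFP, hXmax⟩⟩, rfl⟩
end

section
/- Let ⟨G,M,I⟩ be a formal context, let (A,B) be a concept of ⟨G,M,I⟩, and let FS_{(A,B)} = { α({a}) ∩ B : a ∈ G \ A }. If B', B'' ∈ FS_{(A,B)} satisfy B' ⊊ B'', then B' is not the intent of any immediate successor of (A,B): there is no concept (A₁,B₁) with intent B₁ = B' that is an immediate successor of (A,B) in the concept lattice. -/
/-- `d` is an immediate successor of `c`: a concept strictly above `c`
with no concept strictly in between. -/
def IsImmSucc {G M : Type*} (I : G → M → Prop) (d c : Set G × Set M) : Prop :=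
  IsConcept I d ∧ ConceptLT c d ∧
    ∀ e, IsConcept I e → ConceptLT c e → ¬ ConceptLT e d

/-- The family FS_{(A,B)} = { α({a}) ∩ B : a ∈ G \ A }. -/
def FS {G M : Type*} (I : G → M → Prop) (A : Set G) (B : Set M) : Set (Set M) :=
  {Y | ∃ a, a ∉ A ∧ Y = intentOf I {a} ∩ B}

lemma extent_antitone {G M : Type*} (I : G → M → Prop) {B₁ B₂ : Set M}
    (h : B₁ ⊆ B₂) : extentOf I B₂ ⊆ extentOf I B₁ :=
  fun _ hg b hb => hg b (h hb)

lemma subset_intent_extent {G M : Type*} (I : G → M → Prop) (B : Set M) :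
    B ⊆ intentOf I (extentOf I B) :=
  fun b hb _ hg => hg b hb

lemma subset_extent_intent {G M : Type*} (I : G → M → Prop) (A : Set G) :
    A ⊆ extentOf I (intentOf I A) :=
  fun a ha _ hm => hm a ha

lemma extent_intent_extent {G M : Type*} (I : G → M → Prop) (B : Set M) :
    extentOf I (intentOf I (extentOf I B)) = extentOf I B :=
  Set.Subset.antisymm (extent_antitone I (subset_intent_extent I B))
    (subset_extent_intent I (extentOf I B))

theorem not_immediate_successor_of_not_maximal
    {G M : Type*} (I : G → M → Prop) (A : Set G) (B : Set M)
    (hAB : IsConcept I (A, B))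
    (B' B'' : Set M) (hB' : B' ∈ FS I A B) (hB'' : B'' ∈ FS I A B)
    (hss : B' ⊂ B'') :
    ¬ ∃ c : Set G × Set M, IsConcept I c ∧ c.2 = B' ∧ IsImmSucc I c (A, B) := by
  rintro ⟨c, hc, hc2, hcs, hlt, hmax⟩
  obtain ⟨a'', ha''A, hB''eq⟩ := hB''
  have hB''B : B'' ⊆ B := by rw [hB''eq]; exact Set.inter_subset_right
  have hB'B'' : B' ⊆ B'' := hss.1
  -- the intermediate concept generated by B''
  set e : Set G × Set M := (extentOf I B'', intentOf I (extentOf I B'')) with he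
  have heConcept : IsConcept I e := ⟨rfl, extent_intent_extent I B''⟩
  have hc1 : c.1 = extentOf I B' := by rw [← hc2, hc.2]
  -- a'' ∈ extentOf B''
  have ha''e : a'' ∈ extentOf I B'' := by
    intro b hb
    rw [hB''eq] at hb
    exact hb.1 a'' rfl
  -- A ⊊ e.1
  have hAe : ConceptLT (A, B) e := by
    constructor
    · intro g hg
      have : g ∈ extentOf I B := by rw [hAB.2]; exact hg
      exact fun b hb => this b (hB''B hb)
    · intro hsub
      exact ha''A (hsub ha''e)
  -- e.1 ⊆ c.1
  have hec1 : e.1 ⊆ c.1 := by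
    rw [hc1]; exact extent_antitone I hB'B''
  -- e.1 ≠ c.1
  have hne : e.1 ≠ c.1 := by
    intro heq
    have : B'' ⊆ B' := by
      have h1 : B'' ⊆ intentOf I (extentOf I B'') := subset_intent_extent I B''
      have h2 : intentOf I (extentOf I B'') = intentOf I c.1 := by
        show intentOf I e.1 = intentOf I c.1; rw [heq]
      rw [h2, hc.1, hc2] at h1
      exact h1
    exact hss.2 this
  exact hmax e heConcept hAe ⟨hec1, fun h => hne (Set.Subset.antisymm hec1 h)⟩
end
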